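/- arXiv:1809.06522 — 2 statements merged into one kernel-verified Lean document; each statement's English description precedes it below -/
import Mathlib

section
/- For every integer k ≥ 2, every probability vector P = (p_1,…,p_k) with all p_i > 0, and every integer n ≥ 1, the variance of the cross-entropy part of the plug-in estimator satisfies Var[Σ_{i=1}^k p̂_i·log(1/p_i)] ≤ (1 + log k)²/n. -/
/-- The empirical distribution of `n` samples `ω : Fin n → Fin k`. -/
noncomputable def empDist {n k : ℕ} (ω : Fin n → Fin k) (i : Fin k) : ℝ :=
  ((Finset.univ.filter (fun j => ω j = i)).card : ℝ) / n

open Classical in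
/-- Probability of the event `E` under `n` i.i.d. samples from the distribution `p` on `Fin k`. -/
noncomputable def probOf {n k : ℕ} (p : Fin k → ℝ) (E : Set (Fin n → Fin k)) : ℝ :=
  ∑ ω : Fin n → Fin k, if ω ∈ E then ∏ j, p (ω j) else 0

/-- Kullback–Leibler divergence `D(q ‖ p)` (with the convention `0 · log 0 = 0`,
which holds automatically since `Real.log 0 = 0`). -/
noncomputable def klDiv {k : ℕ} (q p : Fin k → ℝ) : ℝ :=
  ∑ i, q i * Real.log (q i / p i)

/-- Expectation of `f` under `n` i.i.d. samples from the distribution `p` on `Fin k`. -/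
noncomputable def expect {n k : ℕ} (p : Fin k → ℝ) (f : (Fin n → Fin k) → ℝ) : ℝ :=
  ∑ ω : Fin n → Fin k, (∏ j, p (ω j)) * f ω

/-- Variance of `f` under `n` i.i.d. samples from the distribution `p` on `Fin k`. -/
noncomputable def var {n k : ℕ} (p : Fin k → ℝ) (f : (Fin n → Fin k) → ℝ) : ℝ :=
  expect p (fun ω => (f ω - expect p f) ^ 2)

lemma sum_prod_eq {n k : ℕ} (h : Fin n → Fin k → ℝ) :
    ∑ ω : Fin n → Fin k, ∏ j, h j (ω j) = ∏ j, ∑ x, h j x := by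
  rw [Finset.prod_univ_sum, Fintype.piFinset_univ]

lemma expect_single {n k : ℕ} (p : Fin k → ℝ) (hsum : ∑ i, p i = 1) (j : Fin n)
    (g : Fin k → ℝ) :
    ∑ ω : Fin n → Fin k, (∏ j', p (ω j')) * g (ω j) = ∑ x, p x * g x := by
  have key : ∀ ω : Fin n → Fin k, (∏ j', p (ω j')) * g (ω j)
      = ∏ j', (if j' = j then g (ω j') else 1) * p (ω j') := by
    intro ω
    rw [Finset.prod_mul_distrib, Finset.prod_ite_eq', if_pos (Finset.mem_univ j)]
    ring
  simp_rw [key]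
  rw [sum_prod_eq (fun j' x => (if j' = j then g x else 1) * p x)]
  have key2 : ∀ j' : Fin n, (∑ x, (if j' = j then g x else 1) * p x)
      = if j' = j then ∑ x, p x * g x else 1 := by
    intro j'
    by_cases h : j' = j
    · simp only [h, if_true]
      exact Finset.sum_congr rfl fun x _ => mul_comm _ _
    · simp [h, hsum]
  simp_rw [key2]
  rw [Finset.prod_ite_eq', if_pos (Finset.mem_univ j)]

lemma expect_pair {n k : ℕ} (p : Fin k → ℝ) (hsum : ∑ i, p i = 1) (j j2 : Fin n)
    (hjj : j ≠ j2) (g g2 : Fin k → ℝ) :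
    ∑ ω : Fin n → Fin k, (∏ j', p (ω j')) * (g (ω j) * g2 (ω j2))
      = (∑ x, p x * g x) * (∑ x, p x * g2 x) := by
  have key : ∀ ω : Fin n → Fin k, (∏ j', p (ω j')) * (g (ω j) * g2 (ω j2))
      = ∏ j', (if j' = j then g (ω j') else 1) * ((if j' = j2 then g2 (ω j') else 1) * p (ω j')) := by
    intro ω
    simp_rw [← mul_assoc]
    rw [Finset.prod_mul_distrib, Finset.prod_mul_distrib,
      Finset.prod_ite_eq', if_pos (Finset.mem_univ j),
      Finset.prod_ite_eq', if_pos (Finset.mem_univ j2)]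
    ring
  simp_rw [key]
  rw [sum_prod_eq (fun j' x => (if j' = j then g x else 1) * ((if j' = j2 then g2 x else 1) * p x))]
  have key2 : ∀ j' : Fin n, (∑ x, (if j' = j then g x else 1) * ((if j' = j2 then g2 x else 1) * p x))
      = (if j' = j then ∑ x, p x * g x else 1) * (if j' = j2 then ∑ x, p x * g2 x else 1) := by
    intro j'
    by_cases h : j' = j
    · subst h
      simp only [if_pos rfl, if_neg hjj, one_mul, mul_one]
      exact Finset.sum_congr rfl fun x _ => mul_comm _ _
    · by_cases h2 : j' = j2
      · subst h2
        simp only [if_pos rfl, if_neg (Ne.symm hjj), one_mul, mul_one]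
        exact Finset.sum_congr rfl fun x _ => by simp [mul_comm]
      · simp [h, h2, hsum]
  simp_rw [key2]
  rw [Finset.prod_mul_distrib,
    Finset.prod_ite_eq', if_pos (Finset.mem_univ j),
    Finset.prod_ite_eq', if_pos (Finset.mem_univ j2)]

lemma sum_mu {n k : ℕ} (p : Fin k → ℝ) (hsum : ∑ i, p i = 1) :
    ∑ ω : Fin n → Fin k, (∏ j', p (ω j')) = 1 := by
  rw [sum_prod_eq (fun _ x => p x)]
  simp [hsum]

section main
variable {n k : ℕ} (p : Fin k → ℝ)

lemma f_rewrite (L : Fin k → ℝ) (ω : Fin n → Fin k) :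
    ∑ i, (((Finset.univ.filter (fun j => ω j = i)).card : ℝ) / n) * L i
      = (n:ℝ)⁻¹ * ∑ j, L (ω j) := by
  have h1 : ∑ j, L (ω j) = ∑ i, ∑ j ∈ Finset.univ.filter (fun j => ω j = i), L (ω j) :=
    (Finset.sum_fiberwise Finset.univ ω (fun j => L (ω j))).symm
  have h2 : ∀ i, ∑ j ∈ Finset.univ.filter (fun j => ω j = i), L (ω j)
      = ((Finset.univ.filter (fun j => ω j = i)).card : ℝ) * L i := by
    intro i
    rw [Finset.sum_congr rfl (fun j hj => by rw [(Finset.mem_filter.mp hj).2]),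
      Finset.sum_const, nsmul_eq_mul]
  rw [h1, Finset.mul_sum]
  exact Finset.sum_congr rfl fun i _ => by rw [h2 i]; ring

lemma sum_mu_T (hsum : ∑ i, p i = 1) (L : Fin k → ℝ) :
    ∑ ω : Fin n → Fin k, (∏ j, p (ω j)) * (∑ j, L (ω j)) = n * (∑ x, p x * L x) := by
  have : ∀ ω : Fin n → Fin k, (∏ j, p (ω j)) * (∑ j, L (ω j))
      = ∑ j, (∏ j', p (ω j')) * L (ω j) := fun ω => Finset.mul_sum _ _ _
  simp_rw [this]
  rw [Finset.sum_comm]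
  rw [Finset.sum_congr rfl fun j _ => expect_single p hsum j L]
  rw [Finset.sum_const, Finset.card_univ, Fintype.card_fin, nsmul_eq_mul]

lemma sum_mu_T_sq (hsum : ∑ i, p i = 1) (L : Fin k → ℝ) :
    ∑ ω : Fin n → Fin k, (∏ j, p (ω j)) * ((∑ j, L (ω j)) * (∑ j, L (ω j)))
      = n * ((∑ x, p x * (L x * L x)) - (∑ x, p x * L x) * (∑ x, p x * L x)
          + n * ((∑ x, p x * L x) * (∑ x, p x * L x))) := by
  set S1 := ∑ x, p x * L x with hS1
  set S2 := ∑ x, p x * (L x * L x) with hS2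
  have hexp : ∀ ω : Fin n → Fin k, (∏ j, p (ω j)) * ((∑ j, L (ω j)) * (∑ j, L (ω j)))
      = ∑ j, ∑ j2, (∏ j', p (ω j')) * (L (ω j) * L (ω j2)) := by
    intro ω
    rw [Finset.sum_mul_sum]
    rw [Finset.mul_sum]
    exact Finset.sum_congr rfl fun j _ => by rw [Finset.mul_sum]
  simp_rw [hexp]
  rw [Finset.sum_comm]
  have hswap : ∀ j : Fin n, ∑ ω : Fin n → Fin k, ∑ j2, (∏ j', p (ω j')) * (L (ω j) * L (ω j2))
      = ∑ j2, ∑ ω : Fin n → Fin k, (∏ j', p (ω j')) * (L (ω j) * L (ω j2)) :=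
    fun j => Finset.sum_comm
  rw [Finset.sum_congr rfl fun j _ => hswap j]
  have hinner : ∀ j j2 : Fin n,
      (∑ ω : Fin n → Fin k, (∏ j', p (ω j')) * (L (ω j) * L (ω j2)))
        = if j = j2 then S2 else S1 * S1 := by
    intro j j2
    by_cases h : j = j2
    · subst h
      rw [if_pos rfl]
      exact expect_single p hsum j (fun x => L x * L x)
    · rw [if_neg h]
      exact expect_pair p hsum j j2 h L L
  rw [Finset.sum_congr rfl fun j _ => Finset.sum_congr rfl fun j2 _ => hinner j j2]
  have hrow : ∀ j : Fin n, (∑ j2, if j = j2 then S2 else S1 * S1)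
      = (S2 - S1 * S1) + n * (S1 * S1) := by
    intro j
    have : ∀ j2 : Fin n, (if j = j2 then S2 else S1 * S1)
        = (if j = j2 then S2 - S1 * S1 else 0) + S1 * S1 := by
      intro j2; split_ifs <;> ring
    rw [Finset.sum_congr rfl fun j2 _ => this j2, Finset.sum_add_distrib,
      Finset.sum_ite_eq, if_pos (Finset.mem_univ j), Finset.sum_const,
      Finset.card_univ, Fintype.card_fin, nsmul_eq_mul]
  rw [Finset.sum_congr rfl fun j _ => hrow j, Finset.sum_const, Finset.card_univ,
    Fintype.card_fin, nsmul_eq_mul]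

end main

lemma ulog_sq_le_one (u : ℝ) (hu : 0 < u) (hu1 : u ≤ 1) : u * (Real.log u)^2 ≤ 1 := by
  set t : ℝ := -Real.log u with ht
  have ht0 : 0 ≤ t := by
    have := Real.log_nonpos hu.le hu1
    simp [ht]; linarith
  have hueq : u = Real.exp (-t) := by
    rw [ht, neg_neg, Real.exp_log hu]
  have h1 : t/2 ≤ Real.exp (t/2 - 1) := by
    have := Real.add_one_le_exp (t/2 - 1); linarith
  have h2 : (t/2)^2 ≤ Real.exp (t/2 - 1)^2 :=
    pow_le_pow_left₀ (by linarith) h1 2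
  have h3 : Real.exp (t/2 - 1)^2 = Real.exp (t - 2) := by
    rw [sq, ← Real.exp_add]; ring_nf
  have h4 : Real.exp (t - 2) = Real.exp t / Real.exp 2 := Real.exp_sub t 2
  have h5 : (4:ℝ) ≤ Real.exp 2 := by
    have h6 : (2:ℝ) ≤ Real.exp 1 := by have := Real.add_one_le_exp 1; linarith
    have : Real.exp 2 = Real.exp 1 * Real.exp 1 := by rw [← Real.exp_add]; norm_num
    nlinarith [Real.exp_pos 1]
  have h7 : t^2 ≤ Real.exp t := by
    have he2 : (0:ℝ) < Real.exp 2 := Real.exp_pos 2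
    rw [h3, h4] at h2
    have h9 : t^2/4 ≤ Real.exp t / Real.exp 2 := by nlinarith
    have h8 : t^2/4 * Real.exp 2 ≤ Real.exp t := by
      have := mul_le_mul_of_nonneg_right h9 he2.le
      rwa [div_mul_cancel₀ _ (ne_of_gt he2)] at this
    nlinarith [sq_nonneg t]
  have hlog : (Real.log u)^2 = t^2 := by rw [ht]; ring
  rw [hlog, hueq]
  calc Real.exp (-t) * t^2 ≤ Real.exp (-t) * Real.exp t :=
        mul_le_mul_of_nonneg_left h7 (Real.exp_pos _).le
    _ = 1 := by rw [← Real.exp_add]; simp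


/-- Variance of the cross-entropy part of the plug-in estimator:
`Var[∑ᵢ p̂ᵢ·log(1/pᵢ)] ≤ (1 + log k)²/n`. -/
theorem cross_entropy_variance_bound (n k : ℕ) (hn : 1 ≤ n) (hk : 2 ≤ k)
    (p : Fin k → ℝ) (hpos : ∀ i, 0 < p i) (hsum : ∑ i, p i = 1) :
    var p (fun ω : Fin n → Fin k => ∑ i, empDist ω i * Real.log (1 / p i)) ≤
      (1 + Real.log k) ^ 2 / n := by
  have hn0 : (0:ℝ) < n := by exact_mod_cast hn
  have hk0 : (0:ℝ) < k := by positivity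
  set L : Fin k → ℝ := fun x => Real.log (1 / p x) with hL
  set S1 := ∑ x, p x * L x with hS1
  set S2 := ∑ x, p x * (L x * L x) with hS2
  have hfeq : ∀ ω : Fin n → Fin k,
      (∑ i, empDist ω i * Real.log (1 / p i)) = (n:ℝ)⁻¹ * ∑ j, L (ω j) := by
    intro ω
    simp only [empDist, hL]
    exact f_rewrite (fun x => Real.log (1 / p x)) ω
  -- expectation equals S1
  have hE : expect p (fun ω : Fin n → Fin k => ∑ i, empDist ω i * Real.log (1 / p i)) = S1 := by
    unfold expect
    simp_rw [hfeq]
    have : ∀ ω : Fin n → Fin k, (∏ j, p (ω j)) * ((n:ℝ)⁻¹ * ∑ j, L (ω j))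
        = (n:ℝ)⁻¹ * ((∏ j, p (ω j)) * (∑ j, L (ω j))) := fun ω => by ring
    simp_rw [this]
    rw [← Finset.mul_sum, sum_mu_T p hsum L]
    field_simp
    rfl
  -- variance equals (S2 - S1^2)/n
  have hvar : var p (fun ω : Fin n → Fin k => ∑ i, empDist ω i * Real.log (1 / p i))
      = (S2 - S1^2) / n := by
    unfold var
    rw [hE]
    unfold expect
    simp_rw [hfeq]
    have : ∀ ω : Fin n → Fin k,
        (∏ j, p (ω j)) * ((n:ℝ)⁻¹ * (∑ j, L (ω j)) - S1)^2
          = ((n:ℝ)⁻¹)^2 * ((∏ j, p (ω j)) * ((∑ j, L (ω j)) * (∑ j, L (ω j))))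
            - 2 * (n:ℝ)⁻¹ * S1 * ((∏ j, p (ω j)) * (∑ j, L (ω j)))
            + S1^2 * (∏ j, p (ω j)) := fun ω => by ring
    simp_rw [this]
    rw [Finset.sum_add_distrib, Finset.sum_sub_distrib, ← Finset.mul_sum, ← Finset.mul_sum,
      ← Finset.mul_sum, sum_mu_T p hsum L, sum_mu_T_sq p hsum L, sum_mu p hsum]
    rw [← hS1, ← hS2]
    field_simp
    ring
  rw [hvar]
  rw [div_le_div_iff_of_pos_right hn0]
  -- main inequality: S2 - S1^2 ≤ (1 + log k)^2
  set c := Real.log k with hc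
  have hc0 : 0 ≤ c := Real.log_nonneg (by exact_mod_cast Nat.one_le_of_lt hk)
  have hp1 : ∀ x, p x ≤ 1 := by
    intro x
    rw [← hsum]
    exact Finset.single_le_sum (fun i _ => (hpos i).le) (Finset.mem_univ x)
  have hterm : ∀ x : Fin k, p x * (L x - c)^2 ≤ (k:ℝ)⁻¹ + p x * c^2 := by
    intro x
    have hq := hpos x
    have hLc : L x - c = -Real.log ((k:ℝ) * p x) := by
      rw [hL, hc]
      simp only []
      rw [one_div, Real.log_inv, Real.log_mul (ne_of_gt hk0) hq.ne']
      ring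
    rw [hLc, neg_sq]
    by_cases hcase : (k:ℝ) * p x ≤ 1
    · have hu : 0 < (k:ℝ) * p x := by positivity
      have h1 := ulog_sq_le_one _ hu hcase
      have heq : p x * (Real.log ((k:ℝ) * p x))^2
          = (k:ℝ)⁻¹ * (((k:ℝ) * p x) * (Real.log ((k:ℝ) * p x))^2) := by
        field_simp
      rw [heq]
      have h2 : (k:ℝ)⁻¹ * (((k:ℝ) * p x) * (Real.log ((k:ℝ) * p x))^2) ≤ (k:ℝ)⁻¹ * 1 :=
        mul_le_mul_of_nonneg_left h1 (by positivity)
      nlinarith [mul_nonneg hq.le (sq_nonneg c)]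
    · push_neg at hcase
      have h0 : 0 ≤ Real.log ((k:ℝ) * p x) := Real.log_nonneg hcase.le
      have hle : (k:ℝ) * p x ≤ k := by nlinarith [hp1 x]
      have h1 : Real.log ((k:ℝ) * p x) ≤ c := Real.log_le_log (by positivity) hle
      have h2 : (Real.log ((k:ℝ) * p x))^2 ≤ c^2 := pow_le_pow_left₀ h0 h1 2
      nlinarith [hq.le, inv_nonneg.mpr hk0.le]
  have hsum_bound : ∑ x, p x * (L x - c)^2 ≤ 1 + c^2 := by
    calc ∑ x, p x * (L x - c)^2 ≤ ∑ x : Fin k, ((k:ℝ)⁻¹ + p x * c^2) :=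
          Finset.sum_le_sum fun x _ => hterm x
      _ = 1 + c^2 := by
          rw [Finset.sum_add_distrib, Finset.sum_const, Finset.card_univ, Fintype.card_fin,
            nsmul_eq_mul, ← Finset.sum_mul, hsum]
          field_simp
  have hexpand : ∑ x, p x * (L x - c)^2 = S2 - 2*c*S1 + c^2 := by
    have : ∀ x : Fin k, p x * (L x - c)^2
        = p x * (L x * L x) - 2*c*(p x * L x) + c^2 * p x := fun x => by ring
    rw [Finset.sum_congr rfl fun x _ => this x, Finset.sum_add_distrib, Finset.sum_sub_distrib,
      ← Finset.mul_sum, ← Finset.mul_sum, hsum, hS1, hS2]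
    ring
  nlinarith [sq_nonneg (S1 - c), hc0]
end

section
/- For every nonnegative integer m with m ≠ 2, the function f(x) = (1−x)^{m/2}/√(x − x²) is convex on the open interval (0,1). -/
open Set Real

/-- Composition of a convex antitone function with a concave function is convex. -/
lemma myCompAnti {g f : ℝ → ℝ} {s t : Set ℝ} (hg : ConvexOn ℝ t g) (hg' : AntitoneOn g t)
    (hf : ConcaveOn ℝ s f) (hmaps : ∀ x ∈ s, f x ∈ t) :
    ConvexOn ℝ s (fun x => g (f x)) := by
  refine ⟨hf.1, fun x hx y hy a b ha hb hab => ?_⟩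
  have hmem : a • f x + b • f y ∈ t := hg.1 (hmaps x hx) (hmaps y hy) ha hb hab
  have h1 : g (f (a • x + b • y)) ≤ g (a • f x + b • f y) :=
    hg' hmem (hmaps _ (hf.1 hx hy ha hb hab)) (hf.2 hx hy ha hb hab)
  exact h1.trans (hg.2 (hmaps x hx) (hmaps y hy) ha hb hab)

/-- Composition of a convex monotone function with a convex function is convex. -/
lemma myCompMono {g f : ℝ → ℝ} {s t : Set ℝ} (hg : ConvexOn ℝ t g) (hg' : MonotoneOn g t)
    (hf : ConvexOn ℝ s f) (hmaps : ∀ x ∈ s, f x ∈ t) :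
    ConvexOn ℝ s (fun x => g (f x)) := by
  refine ⟨hf.1, fun x hx y hy a b ha hb hab => ?_⟩
  have hmem : a • f x + b • f y ∈ t := hg.1 (hmaps x hx) (hmaps y hy) ha hb hab
  have h1 : g (f (a • x + b • y)) ≤ g (a • f x + b • f y) :=
    hg' (hmaps _ (hf.1 hx hy ha hb hab)) hmem (hf.2 hx hy ha hb hab)
  exact h1.trans (hg.2 (hmaps x hx) (hmaps y hy) ha hb hab)

/-- `x ^ p` is convex on `(0, ∞)` for `p ≤ 0`. -/
lemma convexOn_rpow_nonpos {p : ℝ} (hp : p ≤ 0) :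
    ConvexOn ℝ (Ioi (0 : ℝ)) fun x : ℝ => x ^ p := by
  have hderiv : ∀ x ∈ interior (Ioi (0 : ℝ)), deriv (fun x : ℝ => x ^ p) x = p * x ^ (p - 1) := by
    intro x hx
    rw [interior_Ioi] at hx
    exact Real.deriv_rpow_const x p
  refine MonotoneOn.convexOn_of_deriv (convex_Ioi 0) ?_ ?_ ?_
  · exact fun x hx => (Real.continuousAt_rpow_const x p (Or.inl (ne_of_gt hx))).continuousWithinAt
  · intro x hx
    rw [interior_Ioi] at hx
    exact ((Real.hasDerivAt_rpow_const (Or.inl (ne_of_gt hx))).differentiableAt).differentiableWithinAt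
  · intro x hx y hy hxy
    rw [hderiv x hx, hderiv y hy]
    rw [interior_Ioi] at hx hy
    have h1 : y ^ (p - 1) ≤ x ^ (p - 1) :=
      Real.rpow_le_rpow_of_nonpos hx hxy (by linarith)
    exact mul_le_mul_of_nonpos_left h1 hp

/-- Lemma 12: for every nonnegative integer `m ≠ 2`, the function
`x ↦ (1−x)^{m/2}/√(x − x²)` is convex on `(0,1)`. -/
theorem convexity_of_integrand (m : ℕ) (hm : m ≠ 2) :
    ConvexOn ℝ (Set.Ioo (0 : ℝ) 1)
      (fun x : ℝ => (1 - x) ^ ((m : ℝ) / 2) / Real.sqrt (x - x ^ 2)) := by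
  have hsub : Ioo (0 : ℝ) 1 ⊆ Ioi (0 : ℝ) := fun x hx => hx.1
  -- convexity of x ^ (-(1/2)) on (0,1)
  have P1 : ConvexOn ℝ (Ioo (0 : ℝ) 1) fun x : ℝ => x ^ (-(1 / 2) : ℝ) :=
    (convexOn_rpow_nonpos (by norm_num)).subset hsub (convex_Ioo 0 1)
  -- the key pointwise identity, valid for all m and x ∈ (0,1)
  have hEq : ∀ x ∈ Ioo (0 : ℝ) 1,
      (1 - x) ^ ((m : ℝ) / 2) / Real.sqrt (x - x ^ 2)
        = x ^ (-(1 / 2) : ℝ) * (1 - x) ^ (((m : ℝ) - 1) / 2) := by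
    intro x hx
    obtain ⟨hx0, hx1⟩ := hx
    have h1x : (0 : ℝ) < 1 - x := by linarith
    have hxx : x - x ^ 2 = x * (1 - x) := by ring
    rw [hxx, Real.sqrt_mul hx0.le, Real.sqrt_eq_rpow, Real.sqrt_eq_rpow,
      div_eq_mul_inv, mul_inv, ← Real.rpow_neg hx0.le, ← Real.rpow_neg h1x.le,
      mul_comm ((1 - x) ^ ((m : ℝ) / 2)), mul_assoc, ← Real.rpow_add h1x]
    ring_nf
  rcases Nat.lt_or_ge m 2 with hm2 | hm2
  · interval_cases m
    · -- m = 0 : f = (x - x²)^(-1/2), convex ∘ concave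
      have hconc : ConcaveOn ℝ (Ioo (0 : ℝ) 1) fun x : ℝ => x - x ^ 2 := by
        have h2 : ConvexOn ℝ (Ioo (0 : ℝ) 1) fun x : ℝ => x ^ 2 :=
          ((Even.strictConvexOn_pow even_two two_ne_zero).convexOn).subset
            (subset_univ _) (convex_Ioo 0 1)
        have hid : ConcaveOn ℝ (Ioo (0 : ℝ) 1) fun x : ℝ => x :=
          ⟨convex_Ioo 0 1, fun x _ y _ a b _ _ _ => le_of_eq (by simp)⟩
        exact hid.sub h2
      have hanti : AntitoneOn (fun t : ℝ => t ^ (-(1 / 2) : ℝ)) (Ioi (0 : ℝ)) :=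
        fun x hx y _ hxy => Real.rpow_le_rpow_of_nonpos hx hxy (by norm_num)
      have hmaps : ∀ x ∈ Ioo (0 : ℝ) 1, x - x ^ 2 ∈ Ioi (0 : ℝ) := by
        intro x hx
        have : x - x ^ 2 = x * (1 - x) := by ring
        rw [this]
        exact mul_pos hx.1 (by linarith [hx.2])
      have hc : ConvexOn ℝ (Ioo (0 : ℝ) 1) fun x : ℝ => (x - x ^ 2) ^ (-(1 / 2) : ℝ) :=
        myCompAnti (convexOn_rpow_nonpos (by norm_num)) hanti hconc hmaps
      refine hc.congr fun x hx => ?_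
      obtain ⟨hx0, hx1⟩ := hx
      have hpos : (0 : ℝ) < x - x ^ 2 := hmaps x ⟨hx0, hx1⟩
      simp only [Nat.cast_zero, zero_div, Real.rpow_zero]
      rw [Real.sqrt_eq_rpow, Real.rpow_neg hpos.le]; norm_num
    · -- m = 1 : f = x^(-1/2)
      refine P1.congr fun x hx => ?_
      have := hEq x hx
      rw [this]
      norm_num
  · -- m ≥ 3 (since m ≠ 2)
    have hm3 : 3 ≤ m := by omega
    set a : ℝ := ((m : ℝ) - 1) / 2 with ha
    have ha1 : (1 : ℝ) ≤ a := by
      rw [ha]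
      have : (3 : ℝ) ≤ (m : ℝ) := by exact_mod_cast hm3
      linarith
    have ha0 : (0 : ℝ) ≤ a := by linarith
    -- convexity of (1-x)^a
    have haffine : ConvexOn ℝ (Ioo (0 : ℝ) 1) fun x : ℝ => 1 - x :=
      ⟨convex_Ioo 0 1, fun x _ y _ p q hp hq hpq => le_of_eq (by simp [smul_eq_mul]; ring_nf; linarith)⟩
    have hmono : MonotoneOn (fun t : ℝ => t ^ a) (Ici (0 : ℝ)) :=
      fun x hx _ _ hxy => Real.rpow_le_rpow hx hxy ha0
    have hmaps : ∀ x ∈ Ioo (0 : ℝ) 1, 1 - x ∈ Ici (0 : ℝ) := fun x hx => by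
      simp only [mem_Ici]; linarith [hx.2]
    have P2 : ConvexOn ℝ (Ioo (0 : ℝ) 1) fun x : ℝ => (1 - x) ^ a :=
      myCompMono (convexOn_rpow ha1) hmono haffine hmaps
    -- antitonicity of both factors
    have hanti1 : AntitoneOn (fun x : ℝ => x ^ (-(1 / 2) : ℝ)) (Ioo (0 : ℝ) 1) :=
      fun x hx y _ hxy => Real.rpow_le_rpow_of_nonpos hx.1 hxy (by norm_num)
    have hanti2 : AntitoneOn (fun x : ℝ => (1 - x) ^ a) (Ioo (0 : ℝ) 1) :=
      fun x _ y hy hxy => Real.rpow_le_rpow (by linarith [hy.2]) (by linarith) ha0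
    have hmul : ConvexOn ℝ (Ioo (0 : ℝ) 1)
        ((fun x : ℝ => x ^ (-(1 / 2) : ℝ)) * fun x : ℝ => (1 - x) ^ a) :=
      P1.mul P2 (fun x hx => Real.rpow_nonneg hx.1.le _)
        (fun x hx => Real.rpow_nonneg (by linarith [hx.2]) _)
        (hanti1.monovaryOn hanti2)
    exact hmul.congr fun x hx => (hEq x hx).symm
end
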